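/- Let S ∈ ℝ^{d×m}, M ∈ ℝ^{m×n}, and suppose S is a δ-embedding for range(M) with δ < 1. Then rank(SM) = rank(M), and cond(SM) ≤ ((1+δ)/(1−δ)) · cond(M), where cond denotes the ratio of largest to smallest nonzero singular value. -/

import Mathlib

open Matrix BigOperators

noncomputable def sval {m n : ℕ} (A : Matrix (Fin m) (Fin n) ℝ) (j : Fin n) : ℝ :=
  Real.sqrt ((show (Aᵀ * A).IsHermitian by
    simpa only [Matrix.conjTranspose_eq_transpose_of_trivial] using
      Matrix.isHermitian_conjTranspose_mul_self A).eigenvalues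
    (Tuple.sort (show (Aᵀ * A).IsHermitian by
    simpa only [Matrix.conjTranspose_eq_transpose_of_trivial] using
      Matrix.isHermitian_conjTranspose_mul_self A).eigenvalues j.rev))

noncomputable def specNorm {m n : ℕ} (A : Matrix (Fin m) (Fin n) ℝ) : ℝ :=
  sSup (Set.range (sval A))

noncomputable def sMin {m n : ℕ} (A : Matrix (Fin m) (Fin n) ℝ) : ℝ :=
  sInf (Set.range (sval A))

noncomputable def frob {m n : ℕ} (A : Matrix (Fin m) (Fin n) ℝ) : ℝ :=
  Real.sqrt (∑ i, ∑ j, (A i j)^2)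

noncomputable def enorm {m : ℕ} (x : Fin m → ℝ) : ℝ := Real.sqrt (∑ i, (x i)^2)

def UpperTri {k n : ℕ} (R : Matrix (Fin k) (Fin n) ℝ) : Prop :=
  ∀ (i : Fin k) (j : Fin n), (j : ℕ) < (i : ℕ) → R i j = 0

def lead {k n : ℕ} (R : Matrix (Fin k) (Fin n) ℝ) (ℓ : ℕ) (h1 : ℓ ≤ k) (h2 : ℓ ≤ n) :
    Matrix (Fin ℓ) (Fin ℓ) ℝ := fun i j => R (Fin.castLE h1 i) (Fin.castLE h2 j)

def topRight {k n : ℕ} (R : Matrix (Fin k) (Fin n) ℝ) (ℓ : ℕ) (h1 : ℓ ≤ k) :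
    Matrix (Fin ℓ) (Fin (n - ℓ)) ℝ :=
  fun i j => R (Fin.castLE h1 i) ⟨ℓ + j.1, by have := j.isLt; omega⟩

def trail {k n : ℕ} (R : Matrix (Fin k) (Fin n) ℝ) (ℓ : ℕ) :
    Matrix (Fin (k - ℓ)) (Fin (n - ℓ)) ℝ :=
  fun i j => R ⟨ℓ + i.1, by have := i.isLt; omega⟩ ⟨ℓ + j.1, by have := j.isLt; omega⟩

theorem Matrix.isHermitian_transpose_mul_self {m n : ℕ} (A : Matrix (Fin m) (Fin n) ℝ) :
    (Aᵀ * A).IsHermitian := by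
  simpa only [Matrix.conjTranspose_eq_transpose_of_trivial] using
    Matrix.isHermitian_conjTranspose_mul_self A

lemma enorm_eq_norm {m : ℕ} (x : EuclideanSpace ℝ (Fin m)) : _root_.enorm (x : Fin m → ℝ) = ‖x‖ := by
  rw [EuclideanSpace.norm_eq, _root_.enorm]
  simp [Real.norm_eq_abs, sq_abs]

lemma enorm_nonneg {m : ℕ} (x : Fin m → ℝ) : 0 ≤ _root_.enorm x := Real.sqrt_nonneg _

lemma fin_enorm_eq_zero {m : ℕ} (x : Fin m → ℝ) : _root_.enorm x = 0 ↔ x = 0 := by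
  rw [show x = ((WithLp.toLp 2 x : EuclideanSpace ℝ (Fin m)) : Fin m → ℝ) from rfl, enorm_eq_norm]
  simp

lemma mulVec_sum' {m n : ℕ} (A : Matrix (Fin m) (Fin n) ℝ) {ι : Type*} (s : Finset ι)
    (f : ι → (Fin n → ℝ)) : A *ᵥ (∑ i ∈ s, f i) = ∑ i ∈ s, A *ᵥ f i :=
  map_sum A.mulVecLin f s

lemma dotProduct_sum' {n : ℕ} (x : Fin n → ℝ) {ι : Type*} (s : Finset ι)
    (f : ι → (Fin n → ℝ)) : x ⬝ᵥ (∑ i ∈ s, f i) = ∑ i ∈ s, x ⬝ᵥ f i := by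
  simp only [dotProduct, Finset.sum_apply, Finset.mul_sum]
  exact Finset.sum_comm

section spec
variable {m n : ℕ} (A : Matrix (Fin m) (Fin n) ℝ)

lemma dot_self_eq (y : Fin m → ℝ) : _root_.enorm y ^ 2 = y ⬝ᵥ y := by
  rw [_root_.enorm, Real.sq_sqrt (by positivity)]
  simp [dotProduct, sq]

lemma enorm_mulVec_sq (x : Fin n → ℝ) :
    _root_.enorm (A *ᵥ x) ^ 2 = x ⬝ᵥ ((Aᵀ * A) *ᵥ x) := by
  rw [dot_self_eq, ← mulVec_mulVec, mulVec_transpose, dotProduct_mulVec, dotProduct_comm]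

lemma expand_x (x : Fin n → ℝ) :
    x = ∑ i, (inner ℝ ((isHermitian_transpose_mul_self A).eigenvectorBasis i)
        (WithLp.toLp 2 x : EuclideanSpace ℝ (Fin n)) : ℝ) • ⇑((isHermitian_transpose_mul_self A).eigenvectorBasis i) := by
  have h := ((isHermitian_transpose_mul_self A).eigenvectorBasis).sum_repr (WithLp.toLp 2 x : EuclideanSpace ℝ (Fin n))
  simp only [OrthonormalBasis.repr_apply_apply] at h
  have h' := congrArg WithLp.ofLp h
  rw [WithLp.ofLp_sum] at h'
  simp only [WithLp.ofLp_smul] at h'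
  exact h'.symm

lemma quad_id (x : Fin n → ℝ) :
    _root_.enorm (A *ᵥ x) ^ 2 = ∑ i, (isHermitian_transpose_mul_self A).eigenvalues i *
      (inner ℝ ((isHermitian_transpose_mul_self A).eigenvectorBasis i)
        (WithLp.toLp 2 x : EuclideanSpace ℝ (Fin n)) : ℝ) ^ 2 := by
  set hA := isHermitian_transpose_mul_self A with hAdef
  set c : Fin n → ℝ := fun i => (inner ℝ (hA.eigenvectorBasis i) (WithLp.toLp 2 x : EuclideanSpace ℝ (Fin n)) : ℝ) with hc
  have hdot : ∀ i, x ⬝ᵥ ⇑(hA.eigenvectorBasis i) = c i := by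
    intro i
    simp only [hc, PiLp.inner_apply, RCLike.inner_apply, conj_trivial]
    simp [dotProduct, mul_comm]
  rw [enorm_mulVec_sq]
  have hx : x = ∑ i, c i • ⇑(hA.eigenvectorBasis i) := expand_x A x
  conv_lhs => rw [show (Aᵀ * A) *ᵥ x = (Aᵀ * A) *ᵥ (∑ i, c i • ⇑(hA.eigenvectorBasis i)) from by rw [← hx]]
  rw [mulVec_sum']
  have hev : ∀ i, (Aᵀ * A) *ᵥ (c i • ⇑(hA.eigenvectorBasis i))
      = (c i * hA.eigenvalues i) • ⇑(hA.eigenvectorBasis i) := by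
    intro i
    rw [mulVec_smul]
    rw [show (Aᵀ * A) *ᵥ ⇑(hA.eigenvectorBasis i) = hA.eigenvalues i • ⇑(hA.eigenvectorBasis i)
      from hA.mulVec_eigenvectorBasis i]
    rw [smul_smul]
  simp_rw [hev]
  rw [dotProduct_sum']
  congr 1; funext i
  rw [dotProduct_smul, smul_eq_mul, hdot]
  ring

lemma enorm_sq_eq_sum (x : Fin n → ℝ) :
    _root_.enorm x ^ 2 = ∑ i, (inner ℝ ((isHermitian_transpose_mul_self A).eigenvectorBasis i)
        (WithLp.toLp 2 x : EuclideanSpace ℝ (Fin n)) : ℝ) ^ 2 := by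
  set hA := isHermitian_transpose_mul_self A
  set c : Fin n → ℝ := fun i => (inner ℝ (hA.eigenvectorBasis i) (WithLp.toLp 2 x : EuclideanSpace ℝ (Fin n)) : ℝ) with hc
  have hdot : ∀ i, x ⬝ᵥ ⇑(hA.eigenvectorBasis i) = c i := by
    intro i
    simp only [hc, PiLp.inner_apply, RCLike.inner_apply, conj_trivial]
    simp [dotProduct, mul_comm]
  rw [dot_self_eq]
  have hx : x = ∑ i, c i • ⇑(hA.eigenvectorBasis i) := expand_x A x
  conv_lhs => rw [show x ⬝ᵥ x = x ⬝ᵥ (∑ i, c i • ⇑(hA.eigenvectorBasis i)) from by rw [← hx]]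
  rw [dotProduct_sum']
  congr 1; funext i
  rw [dotProduct_smul, smul_eq_mul, hdot]
  ring
end spec

section spec2
variable {m n : ℕ} (A : Matrix (Fin m) (Fin n) ℝ)

lemma eig_eq_enorm_sq (i : Fin n) :
    (isHermitian_transpose_mul_self A).eigenvalues i
      = _root_.enorm (A *ᵥ ⇑((isHermitian_transpose_mul_self A).eigenvectorBasis i)) ^ 2 := by
  set hA := isHermitian_transpose_mul_self A
  rw [quad_id]
  have horth := hA.eigenvectorBasis.orthonormal
  rw [orthonormal_iff_ite] at horth
  have : ∀ j, (inner ℝ (hA.eigenvectorBasis j)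
      (WithLp.toLp 2 (⇑(hA.eigenvectorBasis i) : Fin n → ℝ) : EuclideanSpace ℝ (Fin n)) : ℝ)
      = if j = i then 1 else 0 := fun j => horth j i
  simp_rw [this]
  simp

lemma eig_nonneg (i : Fin n) : 0 ≤ (isHermitian_transpose_mul_self A).eigenvalues i := by
  rw [eig_eq_enorm_sq]; positivity

lemma sqrt_eig_eq (i : Fin n) :
    Real.sqrt ((isHermitian_transpose_mul_self A).eigenvalues i)
      = _root_.enorm (A *ᵥ ⇑((isHermitian_transpose_mul_self A).eigenvectorBasis i)) := by
  rw [eig_eq_enorm_sq, Real.sqrt_sq (enorm_nonneg _)]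

lemma enorm_eigvec (i : Fin n) :
    _root_.enorm ⇑((isHermitian_transpose_mul_self A).eigenvectorBasis i) = 1 := by
  have := (isHermitian_transpose_mul_self A).eigenvectorBasis.orthonormal.1 i
  rw [show (⇑((isHermitian_transpose_mul_self A).eigenvectorBasis i) : Fin n → ℝ)
    = (((isHermitian_transpose_mul_self A).eigenvectorBasis i : EuclideanSpace ℝ (Fin n)) : Fin n → ℝ) from rfl,
    enorm_eq_norm, this]
end spec2


section spec3
variable {m n : ℕ} (A : Matrix (Fin m) (Fin n) ℝ)

lemma range_sval : Set.range (sval A)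
    = Set.range (fun i => Real.sqrt ((isHermitian_transpose_mul_self A).eigenvalues i)) := by
  have : sval A = (fun i => Real.sqrt ((isHermitian_transpose_mul_self A).eigenvalues i))
      ∘ (fun j : Fin n => Tuple.sort (isHermitian_transpose_mul_self A).eigenvalues j.rev) := rfl
  rw [this, Set.range_comp]
  have hsurj : Function.Surjective
      (fun j : Fin n => Tuple.sort (isHermitian_transpose_mul_self A).eigenvalues j.rev) :=
    (Tuple.sort (isHermitian_transpose_mul_self A).eigenvalues).surjective.comp Fin.rev_surjective
  rw [hsurj.range_eq, Set.image_univ]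

lemma specNorm_nonneg : 0 ≤ specNorm A :=
  Real.sSup_nonneg (by rintro x ⟨j, rfl⟩; exact Real.sqrt_nonneg _)

lemma sval_mem_range (i : Fin n) :
    Real.sqrt ((isHermitian_transpose_mul_self A).eigenvalues i) ∈ Set.range (sval A) := by
  rw [range_sval]; exact ⟨i, rfl⟩

lemma sqrt_eig_le_specNorm (i : Fin n) :
    Real.sqrt ((isHermitian_transpose_mul_self A).eigenvalues i) ≤ specNorm A :=
  le_csSup ((Set.finite_range _).bddAbove) (sval_mem_range A i)

lemma enorm_mulVec_le (x : Fin n → ℝ) :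
    _root_.enorm (A *ᵥ x) ≤ specNorm A * _root_.enorm x := by
  have h1 : _root_.enorm (A *ᵥ x) ^ 2 ≤ (specNorm A * _root_.enorm x) ^ 2 := by
    rw [quad_id, mul_pow, enorm_sq_eq_sum A x, Finset.mul_sum]
    apply Finset.sum_le_sum
    intro i _
    have : (isHermitian_transpose_mul_self A).eigenvalues i ≤ specNorm A ^ 2 := by
      have := sqrt_eig_le_specNorm A i
      have h := pow_le_pow_left₀ (Real.sqrt_nonneg _) this 2
      rwa [Real.sq_sqrt (eig_nonneg A i)] at h
    exact mul_le_mul_of_nonneg_right this (sq_nonneg _)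
  have h0 : 0 ≤ specNorm A * _root_.enorm x := mul_nonneg (specNorm_nonneg A) (enorm_nonneg x)
  nlinarith [enorm_nonneg (A *ᵥ x)]

end spec3

section spec4
variable {m n : ℕ} (A : Matrix (Fin m) (Fin n) ℝ)

lemma eigvec_ker (i : Fin n) (h : (isHermitian_transpose_mul_self A).eigenvalues i = 0) :
    A *ᵥ ⇑((isHermitian_transpose_mul_self A).eigenvectorBasis i) = 0 := by
  rw [← fin_enorm_eq_zero]
  have := eig_eq_enorm_sq A i
  rw [h] at this
  nlinarith [enorm_nonneg (A *ᵥ ⇑((isHermitian_transpose_mul_self A).eigenvectorBasis i))]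

lemma inner_eq_dot (u : EuclideanSpace ℝ (Fin n)) (w : Fin n → ℝ) :
    (inner ℝ u (WithLp.toLp 2 w : EuclideanSpace ℝ (Fin n)) : ℝ) = (u : Fin n → ℝ) ⬝ᵥ w := by
  simp [PiLp.inner_apply, dotProduct, mul_comm]

lemma eigvec_orth_ker (i : Fin n) (hi : (isHermitian_transpose_mul_self A).eigenvalues i ≠ 0)
    (w : Fin n → ℝ) (hw : A *ᵥ w = 0) :
    (inner ℝ ((isHermitian_transpose_mul_self A).eigenvectorBasis i)
      (WithLp.toLp 2 w : EuclideanSpace ℝ (Fin n)) : ℝ) = 0 := by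
  set hA := isHermitian_transpose_mul_self A
  have key : (isHermitian_transpose_mul_self A).eigenvalues i *
      (⇑(hA.eigenvectorBasis i) ⬝ᵥ w) = 0 := by
    have h1 : ((Aᵀ * A) *ᵥ ⇑(hA.eigenvectorBasis i)) ⬝ᵥ w
        = ⇑(hA.eigenvectorBasis i) ⬝ᵥ ((Aᵀ * A) *ᵥ w) := by
      have hsym : (Aᵀ * A)ᵀ = Aᵀ * A := by rw [transpose_mul, transpose_transpose]
      rw [dotProduct_mulVec, ← mulVec_transpose, hsym]
    rw [show (Aᵀ * A) *ᵥ ⇑(hA.eigenvectorBasis i) = hA.eigenvalues i • ⇑(hA.eigenvectorBasis i)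
      from hA.mulVec_eigenvectorBasis i] at h1
    rw [smul_dotProduct, smul_eq_mul] at h1
    rw [← mulVec_mulVec, hw, mulVec_zero, dotProduct_zero] at h1
    exact h1
  rw [inner_eq_dot]
  exact (mul_eq_zero.1 key).resolve_left hi

lemma lower_bound (c₀ : ℝ) (hc₀ : 0 ≤ c₀)
    (hc : ∀ i, (isHermitian_transpose_mul_self A).eigenvalues i ≠ 0 →
      c₀ ≤ Real.sqrt ((isHermitian_transpose_mul_self A).eigenvalues i))
    (x : Fin n → ℝ)
    (hx : ∀ i, (isHermitian_transpose_mul_self A).eigenvalues i = 0 →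
      (inner ℝ ((isHermitian_transpose_mul_self A).eigenvectorBasis i)
        (WithLp.toLp 2 x : EuclideanSpace ℝ (Fin n)) : ℝ) = 0) :
    c₀ * _root_.enorm x ≤ _root_.enorm (A *ᵥ x) := by
  have h1 : (c₀ * _root_.enorm x) ^ 2 ≤ _root_.enorm (A *ᵥ x) ^ 2 := by
    rw [quad_id, mul_pow, enorm_sq_eq_sum A x, Finset.mul_sum]
    apply Finset.sum_le_sum
    intro i _
    by_cases hi : (isHermitian_transpose_mul_self A).eigenvalues i = 0
    · rw [hx i hi, hi]; simp
    · have h := pow_le_pow_left₀ hc₀ (hc i hi) 2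
      rw [Real.sq_sqrt (eig_nonneg A i)] at h
      exact mul_le_mul_of_nonneg_right h (sq_nonneg _)
  nlinarith [enorm_nonneg (A *ᵥ x), mul_nonneg hc₀ (enorm_nonneg x)]

end spec4

section Pfacts
variable {m n : ℕ} (A : Matrix (Fin m) (Fin n) ℝ)

lemma sval_nonneg (j : Fin n) : 0 ≤ sval A j := Real.sqrt_nonneg _

lemma P_finite : ({x | (∃ j, x = sval A j) ∧ x ≠ 0} : Set ℝ).Finite :=
  (Set.finite_range (sval A)).subset (by rintro x ⟨⟨j, hj⟩, -⟩; exact ⟨j, hj.symm⟩)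

lemma sInf_P_nonneg : 0 ≤ sInf {x | (∃ j, x = sval A j) ∧ x ≠ 0} :=
  Real.sInf_nonneg (by rintro x ⟨⟨j, hj⟩, -⟩; rw [hj]; exact sval_nonneg A j)

lemma sqrt_mem_P (i : Fin n) (hi : (isHermitian_transpose_mul_self A).eigenvalues i ≠ 0) :
    Real.sqrt ((isHermitian_transpose_mul_self A).eigenvalues i)
      ∈ {x | (∃ j, x = sval A j) ∧ x ≠ 0} := by
  constructor
  · obtain ⟨j, hj⟩ := sval_mem_range A i
    exact ⟨j, hj.symm⟩
  · have : 0 < (isHermitian_transpose_mul_self A).eigenvalues i :=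
      lt_of_le_of_ne (eig_nonneg A i) (Ne.symm hi)
    exact ne_of_gt (Real.sqrt_pos.2 this)

lemma sInf_P_le (i : Fin n) (hi : (isHermitian_transpose_mul_self A).eigenvalues i ≠ 0) :
    sInf {x | (∃ j, x = sval A j) ∧ x ≠ 0}
      ≤ Real.sqrt ((isHermitian_transpose_mul_self A).eigenvalues i) :=
  csInf_le (P_finite A).bddBelow (sqrt_mem_P A i hi)

lemma enorm_lower (x : Fin n → ℝ)
    (hx : ∀ i, (isHermitian_transpose_mul_self A).eigenvalues i = 0 →
      (inner ℝ ((isHermitian_transpose_mul_self A).eigenvectorBasis i)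
        (WithLp.toLp 2 x : EuclideanSpace ℝ (Fin n)) : ℝ) = 0) :
    sInf {x | (∃ j, x = sval A j) ∧ x ≠ 0} * _root_.enorm x ≤ _root_.enorm (A *ᵥ x) :=
  lower_bound A _ (sInf_P_nonneg A) (fun i hi => sInf_P_le A i hi) x hx

end Pfacts

theorem embedding_rank_and_cond {d m n : ℕ} (δ : ℝ) (hδ0 : 0 ≤ δ) (hδ1 : δ < 1)
    (S : Matrix (Fin d) (Fin m) ℝ) (M : Matrix (Fin m) (Fin n) ℝ)
    (hemb : ∀ x ∈ LinearMap.range M.mulVecLin,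
      (1 - δ) * _root_.enorm x ≤ _root_.enorm (S.mulVec x) ∧ _root_.enorm (S.mulVec x) ≤ (1 + δ) * _root_.enorm x) :
    (S * M).rank = M.rank ∧
    specNorm (S * M) / sInf {x | (∃ j, x = sval (S * M) j) ∧ x ≠ 0}
      ≤ ((1 + δ) / (1 - δ)) * (specNorm M / sInf {x | (∃ j, x = sval M j) ∧ x ≠ 0}) := by
  have hδ : 0 < 1 - δ := by linarith
  have hδ' : 0 ≤ 1 + δ := by linarith
  -- kernel equality
  have hker : ∀ x : Fin n → ℝ, (S * M) *ᵥ x = 0 ↔ M *ᵥ x = 0 := by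
    intro x
    constructor
    · intro h
      rw [← mulVec_mulVec] at h
      have h2 := (hemb (M *ᵥ x) ⟨x, rfl⟩).1
      rw [h, (fin_enorm_eq_zero _).2 rfl] at h2
      have h3 : _root_.enorm (M *ᵥ x) ≤ 0 := by nlinarith [enorm_nonneg (M *ᵥ x)]
      exact (fin_enorm_eq_zero _).1 (le_antisymm h3 (enorm_nonneg _))
    · intro h
      rw [← mulVec_mulVec, h, mulVec_zero]
  have hrank : (S * M).rank = M.rank := by
    have hkerEq : LinearMap.ker (S * M).mulVecLin = LinearMap.ker M.mulVecLin := by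
      ext x
      simpa only [LinearMap.mem_ker, mulVecLin_apply] using hker x
    have h1 := LinearMap.finrank_range_add_finrank_ker (S * M).mulVecLin
    have h2 := LinearMap.finrank_range_add_finrank_ker M.mulVecLin
    rw [hkerEq] at h1
    rw [Matrix.rank, Matrix.rank]
    omega
  refine ⟨hrank, ?_⟩
  set Q : Set ℝ := {x | (∃ j, x = sval (S * M) j) ∧ x ≠ 0} with hQdef
  set P : Set ℝ := {x | (∃ j, x = sval M j) ∧ x ≠ 0} with hPdef
  rcases Q.eq_empty_or_nonempty with hQ | hQ
  · rw [hQ, Real.sInf_empty, div_zero]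
    have : 0 ≤ specNorm M / sInf P := div_nonneg (specNorm_nonneg M) (sInf_P_nonneg M)
    positivity
  · -- Q nonempty
    have hbmem : sInf Q ∈ Q := hQ.csInf_mem (P_finite (S * M))
    obtain ⟨⟨j, hj⟩, hbne⟩ := hbmem
    set k := Tuple.sort (isHermitian_transpose_mul_self (S * M)).eigenvalues j.rev with hk
    have hbk : sInf Q = Real.sqrt ((isHermitian_transpose_mul_self (S * M)).eigenvalues k) := by rw [hj]; rfl
    have hμk : (isHermitian_transpose_mul_self (S * M)).eigenvalues k ≠ 0 := by
      intro h0
      rw [h0, Real.sqrt_zero] at hbk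
      exact hbne hbk
    set u : Fin n → ℝ := ⇑((isHermitian_transpose_mul_self (S * M)).eigenvectorBasis k) with hu
    have hbu : sInf Q = _root_.enorm ((S * M) *ᵥ u) := by rw [hbk, sqrt_eig_eq]
    -- orthogonality of u to kernel eigenvectors of M
    have horth : ∀ i, (isHermitian_transpose_mul_self M).eigenvalues i = 0 →
        (inner ℝ ((isHermitian_transpose_mul_self M).eigenvectorBasis i)
          (WithLp.toLp 2 u : EuclideanSpace ℝ (Fin n)) : ℝ) = 0 := by
      intro i hi
      have hMw : M *ᵥ ⇑((isHermitian_transpose_mul_self M).eigenvectorBasis i) = 0 :=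
        eigvec_ker M i hi
      have hSMw : (S * M) *ᵥ ⇑((isHermitian_transpose_mul_self M).eigenvectorBasis i) = 0 := by
        rw [← mulVec_mulVec, hMw, mulVec_zero]
      have := eigvec_orth_ker (S * M) k hμk _ hSMw
      rw [inner_eq_dot] at this ⊢
      rw [dotProduct_comm]
      exact this
    have hMu_low : sInf P * _root_.enorm u ≤ _root_.enorm (M *ᵥ u) := enorm_lower M u horth
    have hu1 : _root_.enorm u = 1 := enorm_eigvec (S * M) k
    -- (1-δ) sInf P ≤ sInf Q
    have hlow : (1 - δ) * sInf P ≤ sInf Q := by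
      have h2 := (hemb (M *ᵥ u) ⟨u, rfl⟩).1
      rw [hbu, ← mulVec_mulVec]
      calc (1 - δ) * sInf P = (1 - δ) * (sInf P * _root_.enorm u) := by rw [hu1, mul_one]
        _ ≤ (1 - δ) * _root_.enorm (M *ᵥ u) := by
            exact mul_le_mul_of_nonneg_left hMu_low (le_of_lt hδ)
        _ ≤ _root_.enorm (S *ᵥ (M *ᵥ u)) := h2
    -- sInf Q positive
    have hbpos : 0 < sInf Q := lt_of_le_of_ne (sInf_P_nonneg (S * M)) (Ne.symm hbne)
    -- P nonempty and sInf P positive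
    have hMune : M *ᵥ u ≠ 0 := by
      intro h0
      apply hμk
      have : (S * M) *ᵥ u = 0 := by rw [← mulVec_mulVec, h0, mulVec_zero]
      rw [eig_eq_enorm_sq, this, (fin_enorm_eq_zero _).2 rfl]
      norm_num
    have hPex : ∃ i, (isHermitian_transpose_mul_self M).eigenvalues i ≠ 0 := by
      by_contra hall
      push_neg at hall
      apply hMune
      rw [← fin_enorm_eq_zero (M *ᵥ u)]
      have := quad_id M u
      simp_rw [hall] at this
      simp only [zero_mul, Finset.sum_const_zero] at this
      nlinarith [enorm_nonneg (M *ᵥ u)]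
    obtain ⟨i0, hi0⟩ := hPex
    have hPmem : sInf P ∈ P := (Set.nonempty_of_mem (sqrt_mem_P M i0 hi0)).csInf_mem (P_finite M)
    have hdpos : 0 < sInf P := lt_of_le_of_ne (sInf_P_nonneg M) (Ne.symm hPmem.2)
    -- upper bound
    have hup : specNorm (S * M) ≤ (1 + δ) * specNorm M := by
      have hne : Nonempty (Fin n) := ⟨k⟩
      apply csSup_le (Set.range_nonempty _)
      rintro y ⟨j', rfl⟩
      have hmem := sval_mem_range (S * M) (Tuple.sort
        (isHermitian_transpose_mul_self (S * M)).eigenvalues j'.rev)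
      set i' := Tuple.sort (isHermitian_transpose_mul_self (S * M)).eigenvalues j'.rev
      have h1 : sval (S * M) j' = _root_.enorm ((S * M) *ᵥ
          ⇑((isHermitian_transpose_mul_self (S * M)).eigenvectorBasis i')) := by
        rw [sval]; exact sqrt_eig_eq (S * M) i'
      rw [h1, ← mulVec_mulVec]
      set w := ⇑((isHermitian_transpose_mul_self (S * M)).eigenvectorBasis i') with hw
      calc _root_.enorm (S *ᵥ (M *ᵥ w)) ≤ (1 + δ) * _root_.enorm (M *ᵥ w) := (hemb (M *ᵥ w) ⟨w, rfl⟩).2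
        _ ≤ (1 + δ) * (specNorm M * _root_.enorm w) :=
            mul_le_mul_of_nonneg_left (enorm_mulVec_le M w) hδ'
        _ = (1 + δ) * specNorm M := by rw [enorm_eigvec (S * M) i', mul_one]
    -- combine
    have key : specNorm (S * M) / sInf Q ≤ ((1 + δ) * specNorm M) / ((1 - δ) * sInf P) := by
      apply div_le_div₀ (mul_nonneg hδ' (specNorm_nonneg M)) hup (mul_pos hδ hdpos) hlow
    calc specNorm (S * M) / sInf Q ≤ ((1 + δ) * specNorm M) / ((1 - δ) * sInf P) := key
      _ = ((1 + δ) / (1 - δ)) * (specNorm M / sInf P) := by rw [div_mul_div_comm]
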